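/- Let ℂ[s,t,s̄,t̄] be the polynomial ring in four variables and let L denote the lowering operator L = s̄·∂_t − t̄·∂_s acting on it. For homogeneous polynomials f, g ∈ ℂ[s,t] of degrees d₁ and d₂ respectively, and for every natural number k with k ≤ d₁ and k ≤ d₂, the following identity holds in ℂ[s,t,s̄,t̄]: Σ_{l=0}^{k} (−1)^l · C(k,l) · (d₁−l)! · (d₂−k+l)! · (L^l f) · (L^{k−l} g) = (d₁−k)! · (d₂−k)! · (s s̄ + t t̄)^k · Σ_{l=0}^{k} (−1)^l · C(k,l) · (∂_s^{k−l} ∂_t^l f) · (∂_s^l ∂_t^{k−l} g). In particular, on the unit three-sphere s s̄ + t t̄ = 1, the highest-weight (spin j₁+j₂−k) component of the product of the SU(2)-multiplets generated by f and g is given by the classical k-th transvectant of f and g. -/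

import Mathlib

open MvPolynomial Finset

/- Variables of `ℂ[s,t,s̄,t̄]`: `0 ↦ s`, `1 ↦ t`, `2 ↦ s̄`, `3 ↦ t̄`. -/

/-- The embedding `ℂ[s,t] → ℂ[s,t,s̄,t̄]`. -/
noncomputable def ι : MvPolynomial (Fin 2) ℂ →ₐ[ℂ] MvPolynomial (Fin 4) ℂ :=
  rename (Fin.castLE (by norm_num))

/-- The lowering operator `L = s̄·∂_t − t̄·∂_s` on `ℂ[s,t,s̄,t̄]`. -/
noncomputable def Low (F : MvPolynomial (Fin 4) ℂ) : MvPolynomial (Fin 4) ℂ :=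
  X 2 * pderiv 1 F - X 3 * pderiv 0 F

/-- `∂_s` as a function on `ℂ[s,t,s̄,t̄]`. -/
noncomputable def Ds (F : MvPolynomial (Fin 4) ℂ) : MvPolynomial (Fin 4) ℂ := pderiv 0 F

/-- `∂_t` as a function on `ℂ[s,t,s̄,t̄]`. -/
noncomputable def Dt (F : MvPolynomial (Fin 4) ℂ) : MvPolynomial (Fin 4) ℂ := pderiv 1 F

lemma Low_add (F G : MvPolynomial (Fin 4) ℂ) : Low (F + G) = Low F + Low G := by
  simp [Low]; ring

lemma Low_smul (c : ℂ) (F : MvPolynomial (Fin 4) ℂ) : Low (c • F) = c • Low F := by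
  simp [Low, smul_sub, mul_smul_comm]

lemma Low_zero : Low 0 = 0 := by simp [Low]

lemma Low_iter_add (l : ℕ) (F G : MvPolynomial (Fin 4) ℂ) :
    Low^[l] (F + G) = Low^[l] F + Low^[l] G := by
  induction l generalizing F G with
  | zero => simp
  | succ n ih => simp [Function.iterate_succ_apply, Low_add, ih]

lemma Low_iter_smul (l : ℕ) (c : ℂ) (F : MvPolynomial (Fin 4) ℂ) :
    Low^[l] (c • F) = c • Low^[l] F := by
  induction l generalizing F with
  | zero => simp
  | succ n ih => simp [Function.iterate_succ_apply, Low_smul, ih]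

lemma Low_iter_zero (l : ℕ) : Low^[l] (0 : MvPolynomial (Fin 4) ℂ) = 0 := by
  induction l with
  | zero => simp
  | succ n ih => simp [Function.iterate_succ_apply, Low_zero, ih]

noncomputable def u4 (α β : ℂ) : MvPolynomial (Fin 4) ℂ := C α * X 0 + C β * X 1
noncomputable def w4 (α β : ℂ) : MvPolynomial (Fin 4) ℂ := C β * X 2 - C α * X 3

lemma pderiv0_u4 (α β : ℂ) : pderiv 0 (u4 α β) = C α := by
  simp [u4, pderiv_X]
lemma pderiv1_u4 (α β : ℂ) : pderiv 1 (u4 α β) = C β := by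
  simp [u4, pderiv_X]
lemma pderiv0_w4 (α β : ℂ) : pderiv 0 (w4 α β) = 0 := by
  simp [w4, pderiv_X]
lemma pderiv1_w4 (α β : ℂ) : pderiv 1 (w4 α β) = 0 := by
  simp [w4, pderiv_X]


lemma Low_u4_pow (α β : ℂ) (n l : ℕ) :
    Low (u4 α β ^ (n+1) * w4 α β ^ l)
      = ((n+1 : ℕ) : MvPolynomial (Fin 4) ℂ) * (u4 α β ^ n * w4 α β ^ (l+1)) := by
  have h1 : pderiv 1 (u4 α β ^ (n+1) * w4 α β ^ l)
      = ((n+1 : ℕ) : MvPolynomial (Fin 4) ℂ) * (C β * (u4 α β ^ n * w4 α β ^ l)) := by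
    rw [pderiv_mul, (pderiv 1).leibniz_pow, (pderiv 1).leibniz_pow]
    simp only [pderiv1_u4, pderiv1_w4, Nat.add_sub_cancel, nsmul_eq_mul, mul_zero, smul_zero,
      add_zero, zero_mul, mul_one, smul_eq_mul]
    push_cast
    ring
  have h0 : pderiv 0 (u4 α β ^ (n+1) * w4 α β ^ l)
      = ((n+1 : ℕ) : MvPolynomial (Fin 4) ℂ) * (C α * (u4 α β ^ n * w4 α β ^ l)) := by
    rw [pderiv_mul, (pderiv 0).leibniz_pow, (pderiv 0).leibniz_pow]
    simp only [pderiv0_u4, pderiv0_w4, Nat.add_sub_cancel, nsmul_eq_mul, mul_zero, smul_zero,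
      add_zero, zero_mul, mul_one, smul_eq_mul]
    push_cast
    ring
  rw [Low, h0, h1, w4]
  ring


lemma Low_natCast_mul (n : ℕ) (F : MvPolynomial (Fin 4) ℂ) :
    Low ((n : MvPolynomial (Fin 4) ℂ) * F) = (n : MvPolynomial (Fin 4) ℂ) * Low F := by
  rw [← map_natCast (C : ℂ →+* MvPolynomial (Fin 4) ℂ) n, ← smul_eq_C_mul, ← smul_eq_C_mul,
    Low_smul]

lemma Low_iter_u4_pow (α β : ℂ) (d l : ℕ) (h : l ≤ d) :
    Low^[l] (u4 α β ^ d)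
      = (d.descFactorial l : MvPolynomial (Fin 4) ℂ) * (u4 α β ^ (d - l) * w4 α β ^ l) := by
  induction l with
  | zero => simp
  | succ n ih =>
    have hn : n ≤ d := by omega
    have hd : d - n = (d - (n+1)) + 1 := by omega
    rw [Function.iterate_succ_apply', ih hn, Low_natCast_mul, hd, Low_u4_pow,
      Nat.descFactorial_succ]
    have : d - n = (d - (n+1)) + 1 := hd
    push_cast [Nat.descFactorial_succ]
    rw [show d - n = (d - (n+1)) + 1 from hd]
    push_cast
    ring

lemma Dt_iter_u4 (α β c : ℂ) (m : ℕ) : ∀ l : ℕ, l ≤ m →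
    Dt^[l] (C c * u4 α β ^ m)
      = C (c * (m.descFactorial l : ℂ) * β ^ l) * u4 α β ^ (m - l) := by
  intro l
  induction l with
  | zero => intro _; simp
  | succ n ih =>
    intro h
    rw [Function.iterate_succ_apply', ih (by omega), Dt, pderiv_mul, pderiv_C,
      (pderiv 1).leibniz_pow, pderiv1_u4]
    have hd : m - n = (m - (n+1)) + 1 := by omega
    rw [hd]
    simp only [zero_mul, zero_add, Nat.add_sub_cancel, nsmul_eq_mul, smul_eq_mul]
    rw [Nat.descFactorial_succ, show m - n = (m - (n+1)) + 1 from hd]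
    push_cast
    rw [map_mul, map_mul, map_mul, map_mul, map_mul, map_add, map_one, map_pow, map_pow,
      show ((m - (n+1) : ℕ) : MvPolynomial (Fin 4) ℂ) = C ((m - (n+1) : ℕ) : ℂ) from
        (map_natCast C _).symm]
    ring

lemma Ds_iter_u4 (α β c : ℂ) (m : ℕ) : ∀ l : ℕ, l ≤ m →
    Ds^[l] (C c * u4 α β ^ m)
      = C (c * (m.descFactorial l : ℂ) * α ^ l) * u4 α β ^ (m - l) := by
  intro l
  induction l with
  | zero => intro _; simp
  | succ n ih =>
    intro h
    rw [Function.iterate_succ_apply', ih (by omega), Ds, pderiv_mul, pderiv_C,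
      (pderiv 0).leibniz_pow, pderiv0_u4]
    have hd : m - n = (m - (n+1)) + 1 := by omega
    rw [hd]
    simp only [zero_mul, zero_add, Nat.add_sub_cancel, nsmul_eq_mul, smul_eq_mul]
    rw [Nat.descFactorial_succ, show m - n = (m - (n+1)) + 1 from hd]
    push_cast
    rw [map_mul, map_mul, map_mul, map_mul, map_mul, map_add, map_one, map_pow, map_pow,
      show ((m - (n+1) : ℕ) : MvPolynomial (Fin 4) ℂ) = C ((m - (n+1) : ℕ) : ℂ) from
        (map_natCast C _).symm]
    ring

noncomputable def lin (α β : ℂ) : MvPolynomial (Fin 2) ℂ := C α * X 0 + C β * X 1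

lemma ι_lin_pow (α β : ℂ) (d : ℕ) : ι (lin α β ^ d) = u4 α β ^ d := by
  rw [map_pow]
  congr 1
  simp [ι, lin, u4, rename_C, rename_X]

lemma sum_sub_pow {R : Type*} [CommRing R] (x y : R) (k : ℕ) :
    ∑ l ∈ range (k+1), (-1 : R)^l * (k.choose l : R) * x^(k-l) * y^l = (x - y)^k := by
  rw [sub_eq_add_neg, add_pow, ← Finset.sum_range_reflect]
  apply Finset.sum_congr rfl
  intro l hl
  rw [Finset.mem_range] at hl
  have hl' : l ≤ k := by omega
  rw [show k + 1 - 1 - l = k - l from by omega, Nat.sub_sub_self hl', Nat.choose_symm hl',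
    neg_pow]
  ring

lemma DsDt_iter (α β : ℂ) (d k l : ℕ) (hlk : l ≤ k) (hkd : k ≤ d) :
    Ds^[k-l] (Dt^[l] (u4 α β ^ d))
      = C ((d.descFactorial k : ℂ) * α^(k-l) * β^l) * u4 α β ^ (d-k) := by
  have h1 := Dt_iter_u4 α β 1 d l (le_trans hlk hkd)
  rw [map_one, one_mul] at h1
  rw [h1, Ds_iter_u4 α β _ (d - l) (k - l) (by omega),
    show d - l - (k - l) = d - k from by omega]
  congr 1
  have hds : ((d - l).descFactorial (k - l) * d.descFactorial l : ℕ) = d.descFactorial k :=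
    Nat.descFactorial_mul_descFactorial hlk
  rw [← hds]
  push_cast
  ring

lemma gen_case (d₁ d₂ k : ℕ) (hk₁ : k ≤ d₁) (hk₂ : k ≤ d₂) (α β γ δ : ℂ) :
    ∑ l ∈ range (k + 1),
        (-1 : MvPolynomial (Fin 4) ℂ) ^ l * (k.choose l : MvPolynomial (Fin 4) ℂ) *
          ((d₁ - l).factorial : MvPolynomial (Fin 4) ℂ) *
          ((d₂ - k + l).factorial : MvPolynomial (Fin 4) ℂ) *
          (Low^[l] (ι (lin α β ^ d₁))) * (Low^[k - l] (ι (lin γ δ ^ d₂))) =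
      ((d₁ - k).factorial : MvPolynomial (Fin 4) ℂ) *
        ((d₂ - k).factorial : MvPolynomial (Fin 4) ℂ) *
        (X 0 * X 2 + X 1 * X 3) ^ k *
        ∑ l ∈ range (k + 1),
          (-1 : MvPolynomial (Fin 4) ℂ) ^ l * (k.choose l : MvPolynomial (Fin 4) ℂ) *
            (Ds^[k - l] (Dt^[l] (ι (lin α β ^ d₁)))) *
            (Ds^[l] (Dt^[k - l] (ι (lin γ δ ^ d₂)))) := by
  rw [ι_lin_pow, ι_lin_pow]
  have key : (u4 α β) * (w4 γ δ) - (u4 γ δ) * (w4 α β) = C (α*δ - β*γ) * (X 0 * X 2 + X 1 * X 3) := by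
    simp only [u4, w4, map_sub, map_mul]
    ring
  have keyC : (C α * C δ : MvPolynomial (Fin 4) ℂ) - C β * C γ = C (α*δ - β*γ) := by
    rw [map_sub, map_mul, map_mul]
  -- LHS transformation
  have hLHS : ∑ l ∈ range (k + 1),
        (-1 : MvPolynomial (Fin 4) ℂ) ^ l * (k.choose l : MvPolynomial (Fin 4) ℂ) *
          ((d₁ - l).factorial : MvPolynomial (Fin 4) ℂ) *
          ((d₂ - k + l).factorial : MvPolynomial (Fin 4) ℂ) *
          (Low^[l] ((u4 α β) ^ d₁)) * (Low^[k - l] ((u4 γ δ) ^ d₂))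
      = (d₁.factorial : MvPolynomial (Fin 4) ℂ) * (d₂.factorial : MvPolynomial (Fin 4) ℂ) *
          ((u4 α β) ^ (d₁ - k) * (u4 γ δ) ^ (d₂ - k)) *
          ∑ l ∈ range (k + 1),
            (-1 : MvPolynomial (Fin 4) ℂ) ^ l * (k.choose l : MvPolynomial (Fin 4) ℂ) *
              ((u4 α β) * (w4 γ δ)) ^ (k - l) * ((u4 γ δ) * (w4 α β)) ^ l := by
    rw [Finset.mul_sum]
    apply Finset.sum_congr rfl
    intro l hl
    rw [Finset.mem_range] at hl
    have hl' : l ≤ k := by omega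
    rw [Low_iter_u4_pow α β d₁ l (by omega), Low_iter_u4_pow γ δ d₂ (k - l) (by omega)]
    have c1 : ((d₁ - l).factorial : MvPolynomial (Fin 4) ℂ) * (d₁.descFactorial l : MvPolynomial (Fin 4) ℂ)
        = (d₁.factorial : MvPolynomial (Fin 4) ℂ) := by
      rw [← Nat.cast_mul, Nat.factorial_mul_descFactorial (by omega)]
    have c2 : ((d₂ - k + l).factorial : MvPolynomial (Fin 4) ℂ) * (d₂.descFactorial (k - l) : MvPolynomial (Fin 4) ℂ)
        = (d₂.factorial : MvPolynomial (Fin 4) ℂ) := by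
      rw [← Nat.cast_mul, show d₂ - k + l = d₂ - (k - l) from by omega,
        Nat.factorial_mul_descFactorial (by omega)]
    have e3 : (u4 α β) ^ (d₁ - l) = (u4 α β) ^ (d₁ - k) * (u4 α β) ^ (k - l) := by
      rw [← pow_add]; congr 1; omega
    have e4 : (u4 γ δ) ^ (d₂ - (k - l)) = (u4 γ δ) ^ (d₂ - k) * (u4 γ δ) ^ l := by
      rw [← pow_add]; congr 1; omega
    calc (-1 : MvPolynomial (Fin 4) ℂ) ^ l * (k.choose l : MvPolynomial (Fin 4) ℂ) *
          ((d₁ - l).factorial : MvPolynomial (Fin 4) ℂ) *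
          ((d₂ - k + l).factorial : MvPolynomial (Fin 4) ℂ) *
          ((d₁.descFactorial l : MvPolynomial (Fin 4) ℂ) * ((u4 α β) ^ (d₁ - l) * (w4 α β) ^ l)) *
          ((d₂.descFactorial (k-l) : MvPolynomial (Fin 4) ℂ) * ((u4 γ δ) ^ (d₂ - (k - l)) * (w4 γ δ) ^ (k - l)))
        = (((d₁ - l).factorial : MvPolynomial (Fin 4) ℂ) * (d₁.descFactorial l : MvPolynomial (Fin 4) ℂ))
          * (((d₂ - k + l).factorial : MvPolynomial (Fin 4) ℂ) * (d₂.descFactorial (k-l) : MvPolynomial (Fin 4) ℂ))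
          * ((-1) ^ l * (k.choose l : MvPolynomial (Fin 4) ℂ)
            * ((u4 α β) ^ (d₁ - l) * (w4 α β) ^ l) * ((u4 γ δ) ^ (d₂ - (k - l)) * (w4 γ δ) ^ (k - l))) := by ring
      _ = _ := by
          rw [c1, c2, e3, e4, mul_pow, mul_pow]
          ring
  -- RHS transformation
  have hRHS : ∑ l ∈ range (k + 1),
        (-1 : MvPolynomial (Fin 4) ℂ) ^ l * (k.choose l : MvPolynomial (Fin 4) ℂ) *
          (Ds^[k - l] (Dt^[l] ((u4 α β) ^ d₁))) * (Ds^[l] (Dt^[k - l] ((u4 γ δ) ^ d₂)))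
      = (d₁.descFactorial k : MvPolynomial (Fin 4) ℂ) * (d₂.descFactorial k : MvPolynomial (Fin 4) ℂ) *
          ((u4 α β) ^ (d₁ - k) * (u4 γ δ) ^ (d₂ - k)) *
          ∑ l ∈ range (k + 1),
            (-1 : MvPolynomial (Fin 4) ℂ) ^ l * (k.choose l : MvPolynomial (Fin 4) ℂ) *
              (C α * C δ) ^ (k - l) * (C β * C γ) ^ l := by
    rw [Finset.mul_sum]
    apply Finset.sum_congr rfl
    intro l hl
    rw [Finset.mem_range] at hl
    have hl' : l ≤ k := by omega
    have h2 := DsDt_iter γ δ d₂ k (k - l) (by omega) hk₂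
    rw [show k - (k - l) = l from by omega] at h2
    rw [DsDt_iter α β d₁ k l hl' hk₁, h2, map_mul, map_mul, map_mul, map_mul, map_pow, map_pow,
      map_pow, map_pow, map_natCast, map_natCast, mul_pow, mul_pow]
    ring
  rw [hLHS, hRHS, sum_sub_pow, sum_sub_pow, key, keyC]
  have c1 : ((d₁ - k).factorial : MvPolynomial (Fin 4) ℂ) * (d₁.descFactorial k : MvPolynomial (Fin 4) ℂ)
      = (d₁.factorial : MvPolynomial (Fin 4) ℂ) := by
    rw [← Nat.cast_mul, Nat.factorial_mul_descFactorial hk₁]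
  have c2 : ((d₂ - k).factorial : MvPolynomial (Fin 4) ℂ) * (d₂.descFactorial k : MvPolynomial (Fin 4) ℂ)
      = (d₂.factorial : MvPolynomial (Fin 4) ℂ) := by
    rw [← Nat.cast_mul, Nat.factorial_mul_descFactorial hk₂]
  rw [mul_pow, ← c1, ← c2]
  ring

lemma mem_span_of_matrix {M : Type*} [AddCommGroup M] [Module ℂ M] {n : ℕ}
    (A : Matrix (Fin n) (Fin n) ℂ) (hA : IsUnit A.det) (w v : Fin n → M)
    (h : ∀ j, v j = ∑ m, A j m • w m) (S : Set M)
    (hS : ∀ j, v j ∈ Submodule.span ℂ S) (m : Fin n) : w m ∈ Submodule.span ℂ S := by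
  have hw : w m = ∑ j, (A⁻¹ m j) • v j := by
    simp only [h, Finset.smul_sum, smul_smul]
    rw [Finset.sum_comm]
    have : ∀ m' : Fin n, ∑ j, (A⁻¹ m j * A j m') • w m' = ((A⁻¹ * A) m m') • w m' := by
      intro m'
      rw [Matrix.mul_apply, ← Finset.sum_smul]
    simp only [this, Matrix.nonsing_inv_mul A hA, Matrix.one_apply]
    simp [ite_smul]
  rw [hw]
  exact Submodule.sum_mem _ fun j _ => Submodule.smul_mem _ _ (hS j)

lemma monomial_mem_span (d a b : ℕ) (hab : a + b = d) :
    (X 0 ^ a * X 1 ^ b : MvPolynomial (Fin 2) ℂ) ∈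
      Submodule.span ℂ (Set.range fun p : ℂ × ℂ => lin p.1 p.2 ^ d) := by
  -- Vandermonde argument
  set S : Set (MvPolynomial (Fin 2) ℂ) := Set.range fun p : ℂ × ℂ => lin p.1 p.2 ^ d
  set w : Fin (d+1) → MvPolynomial (Fin 2) ℂ := fun m => X 0 ^ (m : ℕ) * X 1 ^ (d - (m:ℕ))
  set v : Fin (d+1) → MvPolynomial (Fin 2) ℂ := fun j => lin ((j : ℕ) : ℂ) 1 ^ d
  set A : Matrix (Fin (d+1)) (Fin (d+1)) ℂ :=
    fun j m => ((j:ℕ) : ℂ) ^ (m:ℕ) * (d.choose (m:ℕ) : ℂ)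
  have hA : IsUnit A.det := by
    have : A = Matrix.vandermonde (fun j : Fin (d+1) => ((j:ℕ) : ℂ)) *
        Matrix.diagonal (fun m : Fin (d+1) => (d.choose (m:ℕ) : ℂ)) := by
      ext j m
      rw [Matrix.mul_diagonal]
      rfl
    rw [this, Matrix.det_mul, Matrix.det_diagonal, Matrix.det_vandermonde]
    apply IsUnit.mul <;> rw [isUnit_iff_ne_zero]
    · apply Finset.prod_ne_zero_iff.mpr
      intro i _
      apply Finset.prod_ne_zero_iff.mpr
      intro j hj
      rw [Finset.mem_Ioi] at hj
      have : (i:ℕ) < (j:ℕ) := hj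
      intro hc
      rw [sub_eq_zero] at hc
      exact absurd (Nat.cast_injective hc) (by omega)
    · apply Finset.prod_ne_zero_iff.mpr
      intro m _
      exact_mod_cast (Nat.choose_pos (by omega : (m:ℕ) ≤ d)).ne'
  have hexp : ∀ j, v j = ∑ m, A j m • w m := by
    intro j
    show lin ((j:ℕ) : ℂ) 1 ^ d = _
    rw [lin, map_one, one_mul, add_pow, ← Fin.sum_univ_eq_sum_range
      (fun m => (C ((j:ℕ):ℂ) * X 0) ^ m * X 1 ^ (d - m) * (d.choose m : MvPolynomial (Fin 2) ℂ))]
    apply Finset.sum_congr rfl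
    intro m _
    rw [smul_eq_C_mul, mul_pow, ← map_pow, map_mul,
      show ((d.choose (m:ℕ) : ℕ) : MvPolynomial (Fin 2) ℂ) = C ((d.choose (m:ℕ) : ℕ) : ℂ) from
        (map_natCast C _).symm]
    ring
  have := mem_span_of_matrix A hA w v hexp S
    (fun j => Submodule.subset_span ⟨(((j:ℕ):ℂ), 1), rfl⟩)
  have hm := this ⟨a, by omega⟩
  simpa [w, show d - a = b from by omega] using hm

lemma homog_mem_span (d : ℕ) (f : MvPolynomial (Fin 2) ℂ) (hf : f.IsHomogeneous d) :
    f ∈ Submodule.span ℂ (Set.range fun p : ℂ × ℂ => lin p.1 p.2 ^ d) := by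
  nth_rewrite 1 [f.as_sum]
  apply Submodule.sum_mem
  intro m hm
  have hdeg : m 0 + m 1 = d := by
    have h1 := hf (mem_support_iff.mp hm)
    rw [Finsupp.weight, Finsupp.linearCombination] at h1
    simp [Finsupp.sum_fintype, Fin.sum_univ_two] at h1
    omega
  have hmon : monomial m (coeff m f) = (coeff m f) • (X 0 ^ (m 0) * X 1 ^ (m 1)) := by
    rw [monomial_eq, smul_eq_C_mul]
    congr 1
    rw [Finsupp.prod_fintype _ _ (fun i => pow_zero _), Fin.prod_univ_two]
  rw [hmon]
  exact Submodule.smul_mem _ _ (monomial_mem_span d (m 0) (m 1) hdeg)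

lemma Ds_iter_add (l : ℕ) (F G : MvPolynomial (Fin 4) ℂ) :
    Ds^[l] (F + G) = Ds^[l] F + Ds^[l] G := by
  induction l generalizing F G with
  | zero => simp
  | succ n ih => simp [Function.iterate_succ_apply, Ds, map_add, ih]

lemma Ds_iter_smul (l : ℕ) (c : ℂ) (F : MvPolynomial (Fin 4) ℂ) :
    Ds^[l] (c • F) = c • Ds^[l] F := by
  induction l generalizing F with
  | zero => simp
  | succ n ih => simp [Function.iterate_succ_apply, Ds, map_smul, ih]

lemma Ds_iter_zero (l : ℕ) : Ds^[l] (0 : MvPolynomial (Fin 4) ℂ) = 0 := by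
  induction l with
  | zero => simp
  | succ n ih => simp [Function.iterate_succ_apply, Ds, ih]

lemma Dt_iter_add (l : ℕ) (F G : MvPolynomial (Fin 4) ℂ) :
    Dt^[l] (F + G) = Dt^[l] F + Dt^[l] G := by
  induction l generalizing F G with
  | zero => simp
  | succ n ih => simp [Function.iterate_succ_apply, Dt, map_add, ih]

lemma Dt_iter_smul (l : ℕ) (c : ℂ) (F : MvPolynomial (Fin 4) ℂ) :
    Dt^[l] (c • F) = c • Dt^[l] F := by
  induction l generalizing F with
  | zero => simp
  | succ n ih => simp [Function.iterate_succ_apply, Dt, map_smul, ih]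

lemma Dt_iter_zero (l : ℕ) : Dt^[l] (0 : MvPolynomial (Fin 4) ℂ) = 0 := by
  induction l with
  | zero => simp
  | succ n ih => simp [Function.iterate_succ_apply, Dt, ih]

/-- The combination of the multiplets generated by two homogeneous polynomials `f`, `g`
of `ℂ[s,t]` via lowering operators equals `(s s̄ + t t̄)^k` times the `k`-th transvectant. -/
theorem multiplet_product_transvectant (d₁ d₂ k : ℕ) (hk₁ : k ≤ d₁) (hk₂ : k ≤ d₂)
    (f g : MvPolynomial (Fin 2) ℂ)
    (hf : f.IsHomogeneous d₁) (hg : g.IsHomogeneous d₂) :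
    ∑ l ∈ range (k + 1),
        (-1 : MvPolynomial (Fin 4) ℂ) ^ l * (k.choose l : MvPolynomial (Fin 4) ℂ) *
          ((d₁ - l).factorial : MvPolynomial (Fin 4) ℂ) *
          ((d₂ - k + l).factorial : MvPolynomial (Fin 4) ℂ) *
          (Low^[l] (ι f)) * (Low^[k - l] (ι g)) =
      ((d₁ - k).factorial : MvPolynomial (Fin 4) ℂ) *
        ((d₂ - k).factorial : MvPolynomial (Fin 4) ℂ) *
        (X 0 * X 2 + X 1 * X 3) ^ k *
        ∑ l ∈ range (k + 1),
          (-1 : MvPolynomial (Fin 4) ℂ) ^ l * (k.choose l : MvPolynomial (Fin 4) ℂ) *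
            (Ds^[k - l] (Dt^[l] (ι f))) * (Ds^[l] (Dt^[k - l] (ι g))) := by
  have hfs := homog_mem_span d₁ f hf
  have hgs := homog_mem_span d₂ g hg
  have main : ∀ f' ∈ Submodule.span ℂ (Set.range fun p : ℂ × ℂ => lin p.1 p.2 ^ d₁),
      ∀ g' ∈ Submodule.span ℂ (Set.range fun p : ℂ × ℂ => lin p.1 p.2 ^ d₂),
      ∑ l ∈ range (k + 1),
        (-1 : MvPolynomial (Fin 4) ℂ) ^ l * (k.choose l : MvPolynomial (Fin 4) ℂ) *
          ((d₁ - l).factorial : MvPolynomial (Fin 4) ℂ) *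
          ((d₂ - k + l).factorial : MvPolynomial (Fin 4) ℂ) *
          (Low^[l] (ι f')) * (Low^[k - l] (ι g')) =
      ((d₁ - k).factorial : MvPolynomial (Fin 4) ℂ) *
        ((d₂ - k).factorial : MvPolynomial (Fin 4) ℂ) *
        (X 0 * X 2 + X 1 * X 3) ^ k *
        ∑ l ∈ range (k + 1),
          (-1 : MvPolynomial (Fin 4) ℂ) ^ l * (k.choose l : MvPolynomial (Fin 4) ℂ) *
            (Ds^[k - l] (Dt^[l] (ι f'))) * (Ds^[l] (Dt^[k - l] (ι g'))) := by
    intro f' hf'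
    induction hf' using Submodule.span_induction with
    | mem x hx =>
      obtain ⟨⟨α, β⟩, rfl⟩ := hx
      intro g' hg'
      induction hg' using Submodule.span_induction with
      | mem y hy =>
        obtain ⟨⟨γ, δ⟩, rfl⟩ := hy
        exact gen_case d₁ d₂ k hk₁ hk₂ α β γ δ
      | zero =>
        simp [map_zero, Low_iter_zero, Ds_iter_zero, Dt_iter_zero]
      | add y z _ _ hy hz =>
        simp only [map_add, Low_iter_add, Dt_iter_add, Ds_iter_add, add_mul, mul_add,
          Finset.sum_add_distrib] at hy hz ⊢
        rw [hy, hz]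
      | smul c y _ hy =>
        simp only [map_smul, Low_iter_smul, Dt_iter_smul, Ds_iter_smul, mul_smul_comm,
          smul_mul_assoc, ← Finset.smul_sum] at hy ⊢
        rw [hy]
    | zero =>
      intro g' _
      simp [map_zero, Low_iter_zero, Ds_iter_zero, Dt_iter_zero]
    | add y z _ _ hy hz =>
      intro g' hg'
      have h1 := hy g' hg'
      have h2 := hz g' hg'
      simp only [map_add, Low_iter_add, Dt_iter_add, Ds_iter_add, add_mul, mul_add,
        Finset.sum_add_distrib] at h1 h2 ⊢
      rw [h1, h2]
    | smul c y _ hy =>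
      intro g' hg'
      have h1 := hy g' hg'
      simp only [map_smul, Low_iter_smul, Dt_iter_smul, Ds_iter_smul, mul_smul_comm,
        smul_mul_assoc, ← Finset.smul_sum] at h1 ⊢
      rw [h1]
  exact main f hfs g hgs
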